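/- Let P be an orthogonal projection and W an isometry with finite-dimensional cokernel on a Hilbert space K. Then W*PW - (W*PW)² = W*P(1 - WW*)PW, and this operator is trace class with trace norm at most dim ker W*. -/

import Mathlib

open scoped ENNReal InnerProductSpace

/-- Trace of a (positive) operator computed in a Hilbert basis (value in `ℝ≥0∞`). -/
noncomputable def traceVia {K : Type*} [NormedAddCommGroup K] [InnerProductSpace ℂ K]
    {ι : Type*} (b : HilbertBasis ι ℂ K) (T : K →L[ℂ] K) : ℝ≥0∞ :=
  ∑' i, ENNReal.ofReal (⟪b i, T (b i)⟫_ℂ).re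

set_option maxHeartbeats 2000000 in
set_option synthInstance.maxHeartbeats 400000 in
/-- For an orthogonal projection `P` and an isometry `W` with
finite-dimensional cokernel, `W*PW - (W*PW)² = W*P(1 - WW*)PW`, and this operator is
trace class with trace norm at most `M = dim ker W*`.  Here `E = |W*PW - (W*PW)²|` is
the positive operator whose square is `star T * T` for `T = W*PW - (W*PW)²`, so that
`traceVia b E` is the trace norm of `T`. -/
theorem stmt2 {K : Type*} [NormedAddCommGroup K] [InnerProductSpace ℂ K] [CompleteSpace K]
    (P W E : K →L[ℂ] K)
    (hP : IsSelfAdjoint P ∧ P * P = P)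
    (hW : star W * W = 1)
    (M : ℕ)
    (hfin : FiniteDimensional ℂ (LinearMap.ker (star W).toLinearMap))
    (hM : Module.finrank ℂ (LinearMap.ker (star W).toLinearMap) = M)
    (hE : E.IsPositive ∧
      E * E = star (star W * P * W - (star W * P * W) * (star W * P * W)) *
        (star W * P * W - (star W * P * W) * (star W * P * W))) :
    star W * P * W - (star W * P * W) * (star W * P * W)
      = star W * P * (1 - W * star W) * P * W ∧
    ∀ (ι : Type*) (b : HilbertBasis ι ℂ K), traceVia b E ≤ (M : ℝ≥0∞) := by
  obtain ⟨hPsa, hPP⟩ := hP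
  obtain ⟨hEpos, hEsq⟩ := hE
  have h1 : star W * P * W - (star W * P * W) * (star W * P * W)
      = star W * P * (1 - W * star W) * P * W := by
    have h : star W * P * (1 - W * star W) * P * W
        = star W * (P * P) * W - (star W * P * W) * (star W * P * W) := by noncomm_ring
    rw [h, hPP]
  refine ⟨h1, ?_⟩
  set Q : K →L[ℂ] K := 1 - W * star W with hQdef
  set C : K →L[ℂ] K := P * W with hCdef
  have hQsa : star Q = Q := by
    simp [hQdef, star_sub, star_mul]
  have hQ2 : Q * Q = Q := by
    have hww : W * star W * (W * star W) = W * star W := by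
      calc W * star W * (W * star W) = W * (star W * W) * star W := by noncomm_ring
        _ = W * star W := by rw [hW]; noncomm_ring
    calc Q * Q = 1 - W * star W - W * star W + W * star W * (W * star W) := by
          rw [hQdef]; noncomm_ring
      _ = Q := by rw [hww, hQdef]; noncomm_ring
  have hCs : star C = star W * P := by rw [hCdef, star_mul, hPsa.star_eq]
  have hTform : star W * P * W - (star W * P * W) * (star W * P * W) = star C * Q * C := by
    rw [h1, hCs, hCdef, hQdef]; noncomm_ring
  have hTsplit : star C * Q * C = star (Q * C) * (Q * C) := by
    conv_rhs => rw [star_mul Q C, hQsa]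
    have h : star C * Q * (Q * C) = star C * (Q * Q) * C := by noncomm_ring
    rw [h, hQ2]
  have hT0 : 0 ≤ star C * Q * C := hTsplit ▸ star_mul_self_nonneg (Q * C)
  have hE0 : 0 ≤ E := (ContinuousLinearMap.nonneg_iff_isPositive E).mpr hEpos
  have hTsa : IsSelfAdjoint (star C * Q * C) := .of_nonneg hT0
  have hEsq' : E * E = star (star C * Q * C) * (star C * Q * C) := by
    rw [← hTform]; exact hEsq
  have hEeqT : E = star C * Q * C := by
    have ha := CFC.sqrt_unique hEsq' hE0
    have hb := CFC.sqrt_unique (a := star (star C * Q * C) * (star C * Q * C))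
      (b := star C * Q * C) (by rw [hTsa.star_eq]) hT0
    rw [← ha, hb]
  -- norms
  have hWW : ∀ x : K, (star W) (W x) = x := fun x => by
    have := congrArg (fun f : K →L[ℂ] K => f x) hW
    simpa using this
  have hWnorm : ∀ x : K, ‖W x‖ = ‖x‖ := fun x => by
    have h := ContinuousLinearMap.adjoint_inner_left W (x := x) (y := W x)
    rw [← ContinuousLinearMap.star_eq_adjoint] at h
    rw [show (star W) (W x) = x from hWW x] at h
    have h2 : ‖W x‖ ^ 2 = ‖x‖ ^ 2 := by
      rw [← @inner_self_eq_norm_sq ℂ, ← @inner_self_eq_norm_sq ℂ, ← h]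
    calc ‖W x‖ = √(‖W x‖ ^ 2) := (Real.sqrt_sq (norm_nonneg _)).symm
      _ = √(‖x‖ ^ 2) := by rw [h2]
      _ = ‖x‖ := Real.sqrt_sq (norm_nonneg _)
  have hPapp : ∀ x : K, P (P x) = P x := fun x => by
    have := congrArg (fun f : K →L[ℂ] K => f x) hPP
    simpa using this
  have hPnorm : ∀ x : K, ‖P x‖ ≤ ‖x‖ := fun x => by
    have h := ContinuousLinearMap.adjoint_inner_left P (x := x) (y := P x)
    rw [← ContinuousLinearMap.star_eq_adjoint, hPsa.star_eq, hPapp x] at h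
    -- h : ⟪P x, x⟫ = ⟪P x, P x⟫
    have h2 : ‖P x‖ ^ 2 ≤ ‖P x‖ * ‖x‖ := by
      calc ‖P x‖ ^ 2 = (⟪P x, P x⟫_ℂ).re := (@inner_self_eq_norm_sq ℂ _ _ _ _ (P x)).symm
        _ = (⟪P x, x⟫_ℂ).re := by rw [h]
        _ ≤ ‖⟪P x, x⟫_ℂ‖ := Complex.re_le_norm _
        _ ≤ ‖P x‖ * ‖x‖ := norm_inner_le_norm _ _
    nlinarith [norm_nonneg (P x), norm_nonneg x]
  have hCapp : ∀ x : K, ‖C x‖ ≤ ‖x‖ := fun x => by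
    have : C x = P (W x) := rfl
    rw [this]
    exact (hPnorm (W x)).trans_eq (hWnorm x)
  have hCnorm : ‖C‖ ≤ 1 := C.opNorm_le_bound zero_le_one (fun x => by
    simpa [one_mul] using hCapp x)
  have hCsapp : ∀ u : K, ‖(star C) u‖ ≤ ‖u‖ := fun u => by
    calc ‖(star C) u‖ ≤ ‖star C‖ * ‖u‖ := (star C).le_opNorm u
      _ ≤ 1 * ‖u‖ := by
          have : ‖star C‖ ≤ 1 := by rw [norm_star]; exact hCnorm
          exact mul_le_mul_of_nonneg_right this (norm_nonneg u)
      _ = ‖u‖ := one_mul _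
  -- basis of ker W*
  haveI := hfin
  set V := LinearMap.ker (star W).toLinearMap with hVdef
  let e := stdOrthonormalBasis ℂ V
  have hQmem : ∀ y : K, Q y ∈ V := fun y => by
    have h0 : star W * Q = 0 := by
      calc star W * Q = star W - (star W * W) * star W := by rw [hQdef]; noncomm_ring
        _ = 0 := by rw [hW]; noncomm_ring
    have := congrArg (fun f : K →L[ℂ] K => f y) h0
    exact (by simpa [LinearMap.mem_ker, ContinuousLinearMap.mul_apply] using this : (star W) (Q y) = 0)
  have hQfix : ∀ v : K, v ∈ V → Q v = v := fun v hv => by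
    have hv0 : (star W) v = 0 := hv
    simp [hQdef, ContinuousLinearMap.sub_apply, ContinuousLinearMap.mul_apply,
      ContinuousLinearMap.one_apply, hv0]
  have hQexp : ∀ y : K, Q y = ∑ j, ⟪((e j : V) : K), y⟫_ℂ • ((e j : V) : K) := fun y => by
    have hv := (e.sum_repr' (⟨Q y, hQmem y⟩ : V)).symm
    have hv2 := congrArg (Subtype.val : V → K) hv
    simp only [Submodule.coe_sum, SetLike.val_smul] at hv2
    rw [hv2]
    refine Finset.sum_congr rfl fun j _ => ?_
    congr 1
    rw [Submodule.coe_inner]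
    show ⟪((e j : V) : K), Q y⟫_ℂ = ⟪((e j : V) : K), y⟫_ℂ
    have h3 := (ContinuousLinearMap.adjoint_inner_left Q (x := y) (y := ((e j : V) : K))).symm
    rw [← ContinuousLinearMap.star_eq_adjoint, hQsa, hQfix _ (e j).2] at h3
    exact h3
  -- key pointwise formula
  have hkey : ∀ x : K, (⟪x, E x⟫_ℂ).re
      = ∑ j, ‖⟪(star C) ((e j : V) : K), x⟫_ℂ‖ ^ 2 := fun x => by
    have happ : E x = (star C) (Q (C x)) := by rw [hEeqT]; rfl
    have hinner : ⟪x, (star C) (Q (C x))⟫_ℂ = ⟪C x, Q (C x)⟫_ℂ := by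
      rw [ContinuousLinearMap.star_eq_adjoint]
      exact ContinuousLinearMap.adjoint_inner_right C x (Q (C x))
    rw [happ, hinner, hQexp (C x), inner_sum]
    simp only [inner_smul_right]
    rw [Complex.re_sum]
    refine Finset.sum_congr rfl fun j _ => ?_
    have h2 : ⟪((e j : V) : K), C x⟫_ℂ = ⟪(star C) ((e j : V) : K), x⟫_ℂ := by
      rw [ContinuousLinearMap.star_eq_adjoint]
      exact (ContinuousLinearMap.adjoint_inner_left C (x := x) (y := ((e j : V) : K))).symm
    have h3 : ⟪C x, ((e j : V) : K)⟫_ℂ = starRingEnd ℂ ⟪(star C) ((e j : V) : K), x⟫_ℂ := by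
      rw [← inner_conj_symm, h2]
    rw [h2, h3, Complex.mul_conj]
    simp [Complex.normSq_eq_norm_sq, ← Complex.ofReal_pow]
  -- Parseval bound
  have hbound : ∀ (ι : Type _) (b : HilbertBasis ι ℂ K) (y : K), ‖y‖ ≤ 1 →
      ∑' i, ENNReal.ofReal (‖⟪y, b i⟫_ℂ‖ ^ 2) ≤ 1 := by
    intro ι b y hy
    have hs := b.hasSum_inner_mul_inner y y
    have hs2 : HasSum (fun i => ‖⟪y, b i⟫_ℂ‖ ^ 2) ((⟪y, y⟫_ℂ).re) := by
      convert Complex.hasSum_re hs using 1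
      funext i
      show ‖⟪y, b i⟫_ℂ‖ ^ 2 = (⟪y, b i⟫_ℂ * ⟪b i, y⟫_ℂ).re
      rw [← inner_conj_symm (b i) y, Complex.mul_conj]
      simp [Complex.normSq_eq_norm_sq, ← Complex.ofReal_pow]
    have ht : ∑' i, ENNReal.ofReal (‖⟪y, b i⟫_ℂ‖ ^ 2) = ENNReal.ofReal ((⟪y, y⟫_ℂ).re) := by
      rw [← ENNReal.ofReal_tsum_of_nonneg (fun i => sq_nonneg _) hs2.summable, hs2.tsum_eq]
    rw [ht]
    have hy2 : (⟪y, y⟫_ℂ).re = ‖y‖ ^ 2 := @inner_self_eq_norm_sq ℂ _ _ _ _ y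
    rw [hy2]
    have h1 : ‖y‖ ^ 2 ≤ 1 := by nlinarith [norm_nonneg y]
    calc ENNReal.ofReal (‖y‖ ^ 2) ≤ ENNReal.ofReal 1 := ENNReal.ofReal_le_ofReal h1
      _ = 1 := ENNReal.ofReal_one
  -- assemble
  intro ι b
  have h0 : traceVia b E
      = ∑' i, ∑ j, ENNReal.ofReal (‖⟪(star C) ((e j : V) : K), b i⟫_ℂ‖ ^ 2) := by
    unfold traceVia
    congr 1
    funext i
    rw [hkey (b i), ENNReal.ofReal_sum_of_nonneg (fun j _ => sq_nonneg _)]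
  rw [h0, Summable.tsum_finsetSum (fun j _ => ENNReal.summable)]
  have hone : ∀ j, ‖(star C) ((e j : V) : K)‖ ≤ 1 := fun j => by
    have h1 : ‖((e j : V) : K)‖ = 1 := by
      have := e.orthonormal.1 j
      exact this
    calc ‖(star C) ((e j : V) : K)‖ ≤ ‖((e j : V) : K)‖ := hCsapp _
      _ = 1 := h1
  calc ∑ j, ∑' i, ENNReal.ofReal (‖⟪(star C) ((e j : V) : K), b i⟫_ℂ‖ ^ 2)
      ≤ ∑ j : Fin (Module.finrank ℂ V), (1 : ℝ≥0∞) :=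
        Finset.sum_le_sum (fun j _ => hbound ι b _ (hone j))
    _ = (M : ℝ≥0∞) := by
        simp [Finset.card_univ, hM]
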